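/- (Systematic gain under the composite error model with p₀ = 1/2) Let n ≥ 1, N = 2^n, and let A ⊆ Fin N contain the last index N−1 and satisfy G_{i,j} = 0 for every j ∈ A and i ∉ A. Suppose A is partitioned into disjoint sets S₁ and S₂ with A = S₁ ∪ S₂, every element of S₁ smaller than every element of S₂, and N−1 ∈ S₂. For each assignment w : S₁ → ZMod 2, let v_w : Fin N → ZMod 2 be the vector whose coordinates on S₁ are given by w, whose coordinates on S₂ all equal 1, and which is 0 outside A. Then: (1) the average over all 2^{|S₁|} assignments w of the Hamming weight of v_w equals |S₁|/2 + |S₂|; (2) the average over all w of the Hamming weight of (v_w G) restricted to A equals 1 + |S₁|/2. Consequently the systematic gain γ, defined as the ratio of these two averages, equals (|S₁|/2 + |S₂|)/(1 + |S₁|/2). -/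

import Mathlib

/-- The basic polar kernel `F = [[1,0],[1,1]]` over `GF(2)`. -/
def polarF : Matrix (Fin 2) (Fin 2) (ZMod 2) := !![1, 0; 1, 1]

/-- The `n`-fold Kronecker power `G = F^{⊗n}` of the polar kernel over `GF(2)`,
indexed by `Fin (2^n)` (0-indexed), where the first Kronecker factor corresponds
to the most significant bit of the index. -/
def polarG : (n : ℕ) → Matrix (Fin (2 ^ n)) (Fin (2 ^ n)) (ZMod 2)
  | 0 => 1
  | n + 1 =>
    Matrix.reindex
      (finProdFinEquiv.trans (finCongr (by ring)))
      (finProdFinEquiv.trans (finCongr (by ring)))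
      (Matrix.kroneckerMap (· * ·) polarF (polarG n))
/-- The last index `2^n - 1` of `Fin (2^n)`. -/
def lastIdx (n : ℕ) : Fin (2 ^ n) := ⟨2 ^ n - 1, by have := Nat.two_pow_pos n; omega⟩

/-- The error vector of the composite model: coordinates on `S₁` are given by the
assignment `w`, coordinates on `S₂` all equal `1`, and all other coordinates are `0`. -/
def modelVec (n : ℕ) (S₁ S₂ : Finset (Fin (2 ^ n))) (w : {a // a ∈ S₁} → ZMod 2) :
    Fin (2 ^ n) → ZMod 2 :=
  fun i => if h : i ∈ S₁ then w ⟨i, h⟩ else if i ∈ S₂ then 1 else 0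

/-- Re-encoding `v ↦ vG` with the polar generator matrix. -/
def reencode (n : ℕ) (v : Fin (2 ^ n) → ZMod 2) : Fin (2 ^ n) → ZMod 2 :=
  fun j => ∑ i : Fin (2 ^ n), v i * polarG n i j

/-- The Hamming weight of a vector: the number of nonzero coordinates. -/
def hw (n : ℕ) (v : Fin (2 ^ n) → ZMod 2) : ℕ :=
  (Finset.univ.filter fun i => v i ≠ 0).card

/-- The Hamming weight of a vector restricted to the coordinates in `A`. -/
def hwOn (n : ℕ) (A : Finset (Fin (2 ^ n))) (v : Fin (2 ^ n) → ZMod 2) : ℕ :=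
  (A.filter fun j => v j ≠ 0).card

lemma hdiv2 {n : ℕ} (i : Fin (2 ^ (n+1))) : i.val / 2 ^ n < 2 := by
  have h := i.isLt
  have h2 : (2:ℕ) ^ (n+1) = 2 ^ n * 2 := pow_succ 2 n
  exact Nat.div_lt_of_lt_mul (by omega)
lemma hmod2 {n : ℕ} (i : Fin (2 ^ (n+1))) : i.val % 2 ^ n < 2 ^ n :=
  Nat.mod_lt _ (Nat.two_pow_pos n)
lemma polarG_succ_apply (n : ℕ) (i j : Fin (2 ^ (n+1))) :
    polarG (n+1) i j =
      polarF ⟨i.val / 2 ^ n, hdiv2 i⟩ ⟨j.val / 2 ^ n, hdiv2 j⟩ *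
        polarG n ⟨i.val % 2 ^ n, hmod2 i⟩ ⟨j.val % 2 ^ n, hmod2 j⟩ := rfl
lemma polarF_apply_cases : polarF 0 0 = 1 ∧ polarF 0 1 = 0 ∧ polarF 1 0 = 1 ∧ polarF 1 1 = 1 := by
  decide
lemma div_two_pow_cases {n : ℕ} (i : Fin (2 ^ (n+1))) : i.val / 2 ^ n = 0 ∨ i.val / 2 ^ n = 1 :=
  Nat.le_one_iff_eq_zero_or_eq_one.mp (Nat.lt_succ_iff.mp (hdiv2 i))
lemma polarG_eq_zero_of_lt : ∀ (n : ℕ) {i j : Fin (2 ^ n)}, (i : ℕ) < (j : ℕ) → polarG n i j = 0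
  | 0, i, j, h => by omega
  | n + 1, i, j, h => by
    rw [polarG_succ_apply]
    have hp := Nat.two_pow_pos n
    have hi := Nat.div_add_mod i.val (2 ^ n)
    have hj := Nat.div_add_mod j.val (2 ^ n)
    have hmi := hmod2 i
    have hmj := hmod2 j
    rcases div_two_pow_cases i with hdi | hdi <;> rcases div_two_pow_cases j with hdj | hdj <;>
      rw [hdi] at hi <;> rw [hdj] at hj
    · have hm : i.val % 2 ^ n < j.val % 2 ^ n := by omega
      rw [polarG_eq_zero_of_lt n hm, mul_zero]
    · rw [show (⟨i.val / 2 ^ n, hdiv2 i⟩ : Fin 2) = 0 from Fin.ext hdi,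
        show (⟨j.val / 2 ^ n, hdiv2 j⟩ : Fin 2) = 1 from Fin.ext hdj,
        polarF_apply_cases.2.1, zero_mul]
    · omega
    · have hm : i.val % 2 ^ n < j.val % 2 ^ n := by omega
      rw [polarG_eq_zero_of_lt n hm, mul_zero]
lemma polarG_diag : ∀ (n : ℕ) (i : Fin (2 ^ n)), polarG n i i = 1
  | 0, i => by
    have : i = ⟨0, by norm_num⟩ := Fin.ext (by omega)
    subst this; rfl
  | n + 1, i => by
    rw [polarG_succ_apply, polarG_diag n]
    rcases div_two_pow_cases i with h | h <;>
      [rw [show (⟨i.val / 2 ^ n, hdiv2 i⟩ : Fin 2) = 0 from Fin.ext h];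
       rw [show (⟨i.val / 2 ^ n, hdiv2 i⟩ : Fin 2) = 1 from Fin.ext h]] <;>
      simp [polarF_apply_cases.1, polarF_apply_cases.2.2.2]
lemma polarG_colsum : ∀ (n : ℕ) (j : Fin (2 ^ n)),
    ∑ i, polarG n i j = if j = lastIdx n then 1 else 0
  | 0, j => by revert j; decide
  | n + 1, j => by
    have hp := Nat.two_pow_pos n
    set e : Fin 2 × Fin (2 ^ n) ≃ Fin (2 ^ (n+1)) :=
      (finProdFinEquiv.trans (finCongr (by ring))) with he
    rw [← Equiv.sum_comp e (fun i => polarG (n+1) i j)]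
    have hval : ∀ (a : Fin 2) (x : Fin (2 ^ n)), ((e (a, x)) : ℕ) = x + 2 ^ n * a := by
      intro a x; simp [he, finProdFinEquiv]
    have happ : ∀ (a : Fin 2) (x : Fin (2 ^ n)),
        polarG (n+1) (e (a, x)) j =
          polarF a ⟨j.val / 2 ^ n, hdiv2 j⟩ * polarG n x ⟨j.val % 2 ^ n, hmod2 j⟩ := by
      intro a x
      rw [polarG_succ_apply]
      congr 1
      · congr 1
        apply Fin.ext
        simp only [hval]
        rw [Nat.add_mul_div_left _ _ hp, Nat.div_eq_of_lt x.isLt, zero_add]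
      · congr 1
        apply Fin.ext
        simp only [hval]
        rw [Nat.add_mul_mod_self_left, Nat.mod_eq_of_lt x.isLt]
    rw [Fintype.sum_prod_type]
    simp only [happ]
    rw [← Finset.sum_mul_sum]
    rw [polarG_colsum n]
    have hsF : ∑ a : Fin 2, polarF a ⟨j.val / 2 ^ n, hdiv2 j⟩ =
        if (⟨j.val / 2 ^ n, hdiv2 j⟩ : Fin 2) = 1 then 1 else 0 := by
      rcases div_two_pow_cases j with h | h <;>
        [rw [show (⟨j.val / 2 ^ n, hdiv2 j⟩ : Fin 2) = 0 from Fin.ext h];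
         rw [show (⟨j.val / 2 ^ n, hdiv2 j⟩ : Fin 2) = 1 from Fin.ext h]] <;>
        decide
    rw [hsF]
    have hj := Nat.div_add_mod j.val (2 ^ n)
    by_cases hL : j = lastIdx (n+1)
    · have hjv : j.val = 2 ^ (n+1) - 1 := by rw [hL]; rfl
      have h2 : (2:ℕ) ^ (n+1) = 2 ^ n * 2 := pow_succ 2 n
      have hd1 : j.val / 2 ^ n = 1 := by
        rcases div_two_pow_cases j with h | h
        · rw [h] at hj; have := hmod2 j; omega
        · exact h
      have hm1 : j.val % 2 ^ n = 2 ^ n - 1 := by rw [hd1] at hj; omega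
      rw [if_pos hL, if_pos (Fin.ext hd1), if_pos (Fin.ext hm1), one_mul]
    · rw [if_neg hL]
      have h2 : (2:ℕ) ^ (n+1) = 2 ^ n * 2 := pow_succ 2 n
      have hnv : j.val ≠ 2 ^ (n+1) - 1 := fun h => hL (Fin.ext h)
      rcases div_two_pow_cases j with h | h
      · rw [if_neg (by intro hc; have := congrArg Fin.val hc; simp at this; omega), zero_mul]
      · rw [if_pos (Fin.ext h), one_mul]
        rw [h] at hj
        rw [if_neg (by intro hc; have := congrArg Fin.val hc; simp [lastIdx] at this; omega)]
lemma flip_count {ι : Type*} [Fintype ι] [DecidableEq ι] (f : (ι → ZMod 2) → ZMod 2)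
    (a : ι) (hf : ∀ w, f (Function.update w a (w a + 1)) = f w + 1) :
    (Finset.univ.filter fun w => f w ≠ 0).card * 2 = 2 ^ Fintype.card ι := by
  have h11 : (1 : ZMod 2) + 1 = 0 := rfl
  have hσ : ∀ w : ι → ZMod 2,
      Function.update (Function.update w a (w a + 1)) a
        ((Function.update w a (w a + 1)) a + 1) = w := by
    intro w
    rw [Function.update_self, Function.update_idem, add_assoc, h11, add_zero,
      Function.update_eq_self]
  have hne : ∀ x : ZMod 2, x ≠ 0 → x + 1 = 0 := by decide
  have hcard : (Finset.univ.filter fun w => f w ≠ 0).card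
      = (Finset.univ.filter fun w => f w = 0).card := by
    apply Finset.card_bij' (fun w _ => Function.update w a (w a + 1))
      (fun w _ => Function.update w a (w a + 1))
    · intro w _; exact hσ w
    · intro w _; exact hσ w
    · intro w hw
      simp only [Finset.mem_filter, Finset.mem_univ, true_and] at hw ⊢
      rw [hf]; exact hne _ hw
    · intro w hw
      simp only [Finset.mem_filter, Finset.mem_univ, true_and] at hw ⊢
      rw [hf, hw]; exact one_ne_zero
  have htot := Finset.card_filter_add_card_filter_not
    (s := (Finset.univ : Finset (ι → ZMod 2))) (p := fun w => f w ≠ 0)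
  have heq : (Finset.univ.filter fun w : ι → ZMod 2 => ¬ f w ≠ 0)
      = (Finset.univ.filter fun w => f w = 0) := by
    apply Finset.filter_congr; intro w _; simp
  rw [heq] at htot
  have huniv : (Finset.univ : Finset (ι → ZMod 2)).card = 2 ^ Fintype.card ι := by
    simp [Finset.card_univ]
  omega
lemma sum_filter_card (n : ℕ) (S₁ : Finset (Fin (2 ^ n)))
    (F : ({a // a ∈ S₁} → ZMod 2) → Fin (2 ^ n) → ZMod 2)
    (hF : ∀ (w : {a // a ∈ S₁} → ZMod 2) (a : {x // x ∈ S₁}),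
      F (Function.update w a (w a + 1)) a = F w a + 1) :
    ∑ w : {a // a ∈ S₁} → ZMod 2, ((S₁.filter fun i => F w i ≠ 0).card : ℝ)
      = S₁.card * 2 ^ S₁.card / 2 := by
  have hcc : Fintype.card {a // a ∈ S₁} = S₁.card := Fintype.card_coe S₁
  have step1 : ∀ w : {a // a ∈ S₁} → ZMod 2,
      ((S₁.filter fun i => F w i ≠ 0).card : ℝ)
        = ∑ a ∈ S₁.attach, (if F w a.1 ≠ 0 then (1 : ℝ) else 0) := by
    intro w
    rw [Finset.card_filter, ← Finset.sum_attach S₁ (fun i => if F w i ≠ 0 then (1:ℕ) else 0)]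
    push_cast [apply_ite]
    rfl
  simp only [step1]
  rw [Finset.sum_comm]
  have step2 : ∀ a : {x // x ∈ S₁},
      ∑ w : {a // a ∈ S₁} → ZMod 2, (if F w a.1 ≠ 0 then (1 : ℝ) else 0)
        = 2 ^ S₁.card / 2 := by
    intro a
    rw [Finset.sum_boole]
    have := flip_count (fun w => F w a.1) a (fun w => hF w a)
    rw [hcc] at this
    have : (((Finset.univ.filter fun w : {a // a ∈ S₁} → ZMod 2 => F w a.1 ≠ 0).card : ℝ)) * 2
        = 2 ^ S₁.card := by exact_mod_cast congrArg (Nat.cast : ℕ → ℝ) this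
    linarith
  simp only [step2, Finset.sum_const, Finset.card_attach, nsmul_eq_mul]
  ring
lemma modelVec_flip (n : ℕ) (S₁ S₂ : Finset (Fin (2 ^ n)))
    (w : {a // a ∈ S₁} → ZMod 2) (a : {x // x ∈ S₁}) (i : Fin (2 ^ n)) :
    modelVec n S₁ S₂ (Function.update w a (w a + 1)) i
      = modelVec n S₁ S₂ w i + (if i = (a : Fin (2 ^ n)) then 1 else 0) := by
  by_cases h : i ∈ S₁
  · simp only [modelVec, dif_pos h]
    by_cases hia : i = (a : Fin (2 ^ n))
    · have : (⟨i, h⟩ : {x // x ∈ S₁}) = a := Subtype.ext hia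
      rw [this, Function.update_self, if_pos hia]
    · have hne : (⟨i, h⟩ : {x // x ∈ S₁}) ≠ a := fun hc => hia (congrArg Subtype.val hc)
      rw [Function.update_of_ne hne, if_neg hia, add_zero]
  · have hia : i ≠ (a : Fin (2 ^ n)) := fun hc => h (hc ▸ a.2)
    simp only [modelVec, dif_neg h, if_neg hia, add_zero]
lemma reencode_flip (n : ℕ) (S₁ S₂ : Finset (Fin (2 ^ n)))
    (w : {a // a ∈ S₁} → ZMod 2) (a : {x // x ∈ S₁}) :
    reencode n (modelVec n S₁ S₂ (Function.update w a (w a + 1))) (a : Fin (2 ^ n))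
      = reencode n (modelVec n S₁ S₂ w) (a : Fin (2 ^ n)) + 1 := by
  unfold reencode
  simp only [modelVec_flip n S₁ S₂ w a, add_mul, Finset.sum_add_distrib]
  congr 1
  simp only [ite_mul, one_mul, zero_mul]
  rw [Finset.sum_ite_eq' Finset.univ (a : Fin (2 ^ n)) (fun i => polarG n i a)]
  simp [polarG_diag]
lemma hw_model (n : ℕ) (S₁ S₂ : Finset (Fin (2 ^ n))) (hdisj : Disjoint S₁ S₂)
    (w : {a // a ∈ S₁} → ZMod 2) :
    hw n (modelVec n S₁ S₂ w)
      = (S₁.filter fun i => modelVec n S₁ S₂ w i ≠ 0).card + S₂.card := by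
  have hset : (Finset.univ.filter fun i => modelVec n S₁ S₂ w i ≠ 0)
      = (S₁.filter fun i => modelVec n S₁ S₂ w i ≠ 0) ∪ S₂ := by
    ext i
    simp only [Finset.mem_filter, Finset.mem_univ, true_and, Finset.mem_union]
    by_cases h : i ∈ S₁
    · have hns : i ∉ S₂ := fun hs => Finset.disjoint_left.mp hdisj h hs
      simp [h, hns]
    · by_cases h2 : i ∈ S₂
      · simp [modelVec, h, h2]
      · simp [modelVec, h, h2]
  rw [hw, hset, Finset.card_union_of_disjoint
    (Finset.disjoint_of_subset_left (Finset.filter_subset _ _) hdisj)]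
lemma reencode_S2 (n : ℕ) (S₁ S₂ A : Finset (Fin (2 ^ n))) (hA : A = S₁ ∪ S₂)
    (horder : ∀ a ∈ S₁, ∀ b ∈ S₂, a < b)
    (hfrozen : ∀ j ∈ A, ∀ i ∉ A, polarG n i j = 0)
    (w : {a // a ∈ S₁} → ZMod 2) (j : Fin (2 ^ n)) (hj : j ∈ S₂) :
    reencode n (modelVec n S₁ S₂ w) j = if j = lastIdx n then 1 else 0 := by
  rw [← polarG_colsum n j]
  unfold reencode
  refine Finset.sum_congr rfl fun i _ => ?_
  by_cases h1 : i ∈ S₁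
  · rw [polarG_eq_zero_of_lt n (Fin.lt_def.mp (horder i h1 j hj))]
    simp
  · by_cases h2 : i ∈ S₂
    · simp [modelVec, h1, h2]
    · have hiA : i ∉ A := by rw [hA]; simp [h1, h2]
      rw [hfrozen j (by rw [hA]; exact Finset.mem_union_right _ hj) i hiA]
      simp
lemma hwOn_model (n : ℕ) (S₁ S₂ A : Finset (Fin (2 ^ n))) (hA : A = S₁ ∪ S₂)
    (hdisj : Disjoint S₁ S₂) (horder : ∀ a ∈ S₁, ∀ b ∈ S₂, a < b)
    (hlast : lastIdx n ∈ S₂)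
    (hfrozen : ∀ j ∈ A, ∀ i ∉ A, polarG n i j = 0)
    (w : {a // a ∈ S₁} → ZMod 2) :
    hwOn n A (reencode n (modelVec n S₁ S₂ w))
      = (S₁.filter fun j => reencode n (modelVec n S₁ S₂ w) j ≠ 0).card + 1 := by
  have hS2 : (S₂.filter fun j => reencode n (modelVec n S₁ S₂ w) j ≠ 0) = {lastIdx n} := by
    ext j
    simp only [Finset.mem_filter, Finset.mem_singleton]
    constructor
    · rintro ⟨hj, hne⟩
      rw [reencode_S2 n S₁ S₂ A hA horder hfrozen w j hj] at hne
      by_contra hc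
      rw [if_neg hc] at hne
      exact hne rfl
    · rintro rfl
      refine ⟨hlast, ?_⟩
      rw [reencode_S2 n S₁ S₂ A hA horder hfrozen w _ hlast, if_pos rfl]
      exact one_ne_zero
  rw [hwOn, hA, Finset.filter_union, Finset.card_union_of_disjoint
    (Finset.disjoint_filter_filter hdisj), hS2, Finset.card_singleton]

/-- systematic gain under the composite error model with `p₀ = 1/2`:
with `A = S₁ ∪ S₂` as in the composite model, (1) the average Hamming weight of
`v_w` over all assignments `w` equals `|S₁|/2 + |S₂|`; (2) the average Hamming
weight of `v_w G` restricted to `A` equals `1 + |S₁|/2`; consequently the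
systematic gain, the ratio of the two averages, equals
`(|S₁|/2 + |S₂|)/(1 + |S₁|/2)`. -/
theorem systematic_gain_composite_model (n : ℕ) (hn : 1 ≤ n)
    (S₁ S₂ A : Finset (Fin (2 ^ n))) (hA : A = S₁ ∪ S₂) (hdisj : Disjoint S₁ S₂)
    (horder : ∀ a ∈ S₁, ∀ b ∈ S₂, a < b) (hlast : lastIdx n ∈ S₂)
    (hfrozen : ∀ j ∈ A, ∀ i ∉ A, polarG n i j = 0) :
    (∑ w : {a // a ∈ S₁} → ZMod 2, (hw n (modelVec n S₁ S₂ w) : ℝ)) / 2 ^ S₁.card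
        = S₁.card / 2 + S₂.card ∧
    (∑ w : {a // a ∈ S₁} → ZMod 2,
        (hwOn n A (reencode n (modelVec n S₁ S₂ w)) : ℝ)) / 2 ^ S₁.card
        = 1 + S₁.card / 2 ∧
    ((∑ w : {a // a ∈ S₁} → ZMod 2, (hw n (modelVec n S₁ S₂ w) : ℝ)) / 2 ^ S₁.card) /
      ((∑ w : {a // a ∈ S₁} → ZMod 2,
        (hwOn n A (reencode n (modelVec n S₁ S₂ w)) : ℝ)) / 2 ^ S₁.card)
        = (S₁.card / 2 + S₂.card) / (1 + S₁.card / 2) := by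
  have h2k : ((2 : ℝ)) ^ S₁.card ≠ 0 := by positivity
  have hcardW : (Finset.univ : Finset ({a // a ∈ S₁} → ZMod 2)).card = 2 ^ S₁.card := by
    simp [Finset.card_univ]
  have hsum1 : ∑ w : {a // a ∈ S₁} → ZMod 2, (hw n (modelVec n S₁ S₂ w) : ℝ)
      = S₁.card * 2 ^ S₁.card / 2 + 2 ^ S₁.card * S₂.card := by
    have key := sum_filter_card n S₁ (fun w => modelVec n S₁ S₂ w) (by
      intro w a
      show modelVec n S₁ S₂ (Function.update w a (w a + 1)) a = modelVec n S₁ S₂ w a + 1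
      rw [modelVec_flip n S₁ S₂ w a, if_pos rfl])
    calc ∑ w : {a // a ∈ S₁} → ZMod 2, (hw n (modelVec n S₁ S₂ w) : ℝ)
        = ∑ w : {a // a ∈ S₁} → ZMod 2,
            (((S₁.filter fun i => modelVec n S₁ S₂ w i ≠ 0).card : ℝ) + S₂.card) := by
          refine Finset.sum_congr rfl fun w _ => ?_
          rw [hw_model n S₁ S₂ hdisj w]; push_cast; ring
      _ = S₁.card * 2 ^ S₁.card / 2 + 2 ^ S₁.card * S₂.card := by
          rw [Finset.sum_add_distrib, key, Finset.sum_const, hcardW, nsmul_eq_mul]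
          push_cast; ring
  have hsum2 : ∑ w : {a // a ∈ S₁} → ZMod 2,
      (hwOn n A (reencode n (modelVec n S₁ S₂ w)) : ℝ)
      = S₁.card * 2 ^ S₁.card / 2 + 2 ^ S₁.card := by
    have key := sum_filter_card n S₁ (fun w => reencode n (modelVec n S₁ S₂ w)) (by
      intro w a
      exact reencode_flip n S₁ S₂ w a)
    calc ∑ w : {a // a ∈ S₁} → ZMod 2, (hwOn n A (reencode n (modelVec n S₁ S₂ w)) : ℝ)
        = ∑ w : {a // a ∈ S₁} → ZMod 2,
            (((S₁.filter fun j => reencode n (modelVec n S₁ S₂ w) j ≠ 0).card : ℝ) + 1) := by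
          refine Finset.sum_congr rfl fun w _ => ?_
          rw [hwOn_model n S₁ S₂ A hA hdisj horder hlast hfrozen w]; push_cast; ring
      _ = S₁.card * 2 ^ S₁.card / 2 + 2 ^ S₁.card := by
          rw [Finset.sum_add_distrib, key, Finset.sum_const, hcardW, nsmul_eq_mul]
          push_cast; ring
  have h1 : (∑ w : {a // a ∈ S₁} → ZMod 2, (hw n (modelVec n S₁ S₂ w) : ℝ)) / 2 ^ S₁.card
      = S₁.card / 2 + S₂.card := by
    rw [hsum1]; field_simp
  have h2 : (∑ w : {a // a ∈ S₁} → ZMod 2,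
      (hwOn n A (reencode n (modelVec n S₁ S₂ w)) : ℝ)) / 2 ^ S₁.card
      = 1 + S₁.card / 2 := by
    rw [hsum2]; field_simp; ring
  exact ⟨h1, h2, by rw [h1, h2]⟩
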